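/- For each integer i with 0 ≤ i ≤ d/2, the kernel of the restriction of ψ to U_i equals K_i = U_i ∩ U_i^⇓; that is, a vector v ∈ U_i satisfies ψv = 0 if and only if v ∈ K_i. -/
import Mathlib


noncomputable section

open Module Submodule Polynomial

/-- The q-Racah eigenvalue `θ_i = a q^{d-2i} + a⁻¹ q^{2i-d}`. -/
def qRacahTheta {𝕂 : Type*} [Field 𝕂] (d : ℕ) (q a : 𝕂) (i : ℕ) : 𝕂 :=
  a * q ^ ((d : ℤ) - 2 * (i : ℤ)) + a⁻¹ * q ^ (2 * (i : ℤ) - (d : ℤ))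

/-- The polynomial `τ_{ij} = (x-θ_i)(x-θ_{i+1})⋯(x-θ_{j-1})`. -/
def qRacahTau {𝕂 : Type*} [Field 𝕂] (d : ℕ) (q a : 𝕂) (i j : ℕ) : Polynomial 𝕂 :=
  ∏ k ∈ Finset.Ico i j, (Polynomial.X - Polynomial.C (qRacahTheta d q a k))

/-- A tridiagonal pair of q-Racah type, with diameter `d ≥ 1`, on a finite-dimensional
vector space `V` over an algebraically closed field `𝕂`.  The eigenspaces of `A`
(resp. `A*`) are `Veig i` (resp. `Vstar i`) for `0 ≤ i ≤ d`, in a standard ordering,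
with eigenvalues `θ_i = a q^{d-2i} + a⁻¹ q^{2i-d}` (resp. `θ*_i = b q^{d-2i} + b⁻¹ q^{2i-d}`). -/
structure QRacahTDPair (𝕂 V : Type*) [Field 𝕂] [IsAlgClosed 𝕂]
    [AddCommGroup V] [Module 𝕂 V] [FiniteDimensional 𝕂 V] [Nontrivial V] where
  A : Module.End 𝕂 V
  Astar : Module.End 𝕂 V
  d : ℕ
  hd : 1 ≤ d
  q : 𝕂
  a : 𝕂
  b : 𝕂
  hq : q ≠ 0
  ha : a ≠ 0
  hb : b ≠ 0
  hq4 : q ^ 4 ≠ 1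
  Veig : ℕ → Submodule 𝕂 V
  Vstar : ℕ → Submodule 𝕂 V
  hVeig : ∀ i ≤ d, Veig i = Module.End.eigenspace A (qRacahTheta d q a i)
  hVeig_ne : ∀ i ≤ d, Veig i ≠ ⊥
  hVeig_zero : ∀ i, d < i → Veig i = ⊥
  hVeig_all : ∀ μ : 𝕂, Module.End.eigenspace A μ ≠ ⊥ → ∃ i ≤ d, μ = qRacahTheta d q a i
  hVstar : ∀ i ≤ d, Vstar i = Module.End.eigenspace Astar (qRacahTheta d q b i)
  hVstar_ne : ∀ i ≤ d, Vstar i ≠ ⊥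
  hVstar_zero : ∀ i, d < i → Vstar i = ⊥
  hVstar_all : ∀ μ : 𝕂, Module.End.eigenspace Astar μ ≠ ⊥ → ∃ i ≤ d, μ = qRacahTheta d q b i
  hdiag : (⨆ i ∈ Finset.range (d + 1), Veig i) = ⊤
  hdiagStar : (⨆ i ∈ Finset.range (d + 1), Vstar i) = ⊤
  hTri : ∀ i ≤ d, (Veig i).map Astar ≤ Veig (i - 1) ⊔ Veig i ⊔ Veig (i + 1)
  hTriStar : ∀ i ≤ d, (Vstar i).map A ≤ Vstar (i - 1) ⊔ Vstar i ⊔ Vstar (i + 1)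
  hIrred : ∀ W : Submodule 𝕂 V, W.map A ≤ W → W.map Astar ≤ W → W = ⊥ ∨ W = ⊤

namespace QRacahTDPair

variable {𝕂 V : Type*} [Field 𝕂] [IsAlgClosed 𝕂]
  [AddCommGroup V] [Module 𝕂 V] [FiniteDimensional 𝕂 V] [Nontrivial V]

/-- `U_i = (V*_0 + ⋯ + V*_i) ∩ (V_i + ⋯ + V_d)`, the first split decomposition. -/
def U (S : QRacahTDPair 𝕂 V) (i : ℕ) : Submodule 𝕂 V :=
  (⨆ j ∈ Finset.range (i + 1), S.Vstar j) ⊓ (⨆ j ∈ Finset.Icc i S.d, S.Veig j)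

/-- `U_i^⇓ = (V*_0 + ⋯ + V*_i) ∩ (V_0 + ⋯ + V_{d-i})`, the second split decomposition. -/
def Udown (S : QRacahTDPair 𝕂 V) (i : ℕ) : Submodule 𝕂 V :=
  (⨆ j ∈ Finset.range (i + 1), S.Vstar j) ⊓ (⨆ j ∈ Finset.range (S.d - i + 1), S.Veig j)

/-- `K_i = U_i ∩ U_i^⇓`. -/
def Ksub (S : QRacahTDPair 𝕂 V) (i : ℕ) : Submodule 𝕂 V := S.U i ⊓ S.Udown i

/-- `U_{i-1}`, with the convention `U_{-1} = 0`. -/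
def Uprev (S : QRacahTDPair 𝕂 V) : ℕ → Submodule 𝕂 V
  | 0 => ⊥
  | i + 1 => S.U i

/-- The operator `τ_{ij}(A) = (A-θ_i)(A-θ_{i+1})⋯(A-θ_{j-1})`. -/
def tauA (S : QRacahTDPair 𝕂 V) (i j : ℕ) : Module.End 𝕂 V :=
  Polynomial.aeval S.A (qRacahTau S.d S.q S.a i j)

end QRacahTDPair

/-- A tridiagonal pair of q-Racah type together with the operators `K`, `B` (with their
inverses `K⁻¹ = Kinv`, `B⁻¹ = Binv`) and the double lowering operator `ψ`, which is the
unique endomorphism with `ψR - Rψ = (q - q⁻¹)(K - K⁻¹)` (where `R = A - aK - a⁻¹K⁻¹`)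
and `ψ K_i = 0` for `0 ≤ i ≤ d/2`. -/
structure QRacahOps (𝕂 V : Type*) [Field 𝕂] [IsAlgClosed 𝕂]
    [AddCommGroup V] [Module 𝕂 V] [FiniteDimensional 𝕂 V] [Nontrivial V]
    extends QRacahTDPair 𝕂 V where
  K : Module.End 𝕂 V
  Kinv : Module.End 𝕂 V
  B : Module.End 𝕂 V
  Binv : Module.End 𝕂 V
  hKKinv : K * Kinv = 1
  hKinvK : Kinv * K = 1
  hBBinv : B * Binv = 1
  hBinvB : Binv * B = 1
  hK : ∀ i ≤ d, ∀ v ∈ toQRacahTDPair.U i, K v = (q ^ ((d : ℤ) - 2 * (i : ℤ))) • v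
  hB : ∀ i ≤ d, ∀ v ∈ toQRacahTDPair.Udown i, B v = (q ^ ((d : ℤ) - 2 * (i : ℤ))) • v
  ψ : Module.End 𝕂 V
  hψR : ψ * (A - a • K - a⁻¹ • Kinv) - (A - a • K - a⁻¹ • Kinv) * ψ
      = (q - q⁻¹) • (K - Kinv)
  hψKer : ∀ i, 2 * i ≤ d → toQRacahTDPair.Ksub i ≤ LinearMap.ker ψ

namespace QRacahOps

variable {𝕂 V : Type*} [Field 𝕂] [IsAlgClosed 𝕂]
  [AddCommGroup V] [Module 𝕂 V] [FiniteDimensional 𝕂 V] [Nontrivial V]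

/-- The raising map `R = A - aK - a⁻¹K⁻¹`. -/
def R (S : QRacahOps 𝕂 V) : Module.End 𝕂 V := S.A - S.a • S.K - S.a⁻¹ • S.Kinv

/-- The raising map `R^⇓ = A - a⁻¹B - aB⁻¹`. -/
def Rdown (S : QRacahOps 𝕂 V) : Module.End 𝕂 V := S.A - S.a⁻¹ • S.B - S.a • S.Binv

/-- `MK_i`: the submodule of `V` generated by `K_i` under the subalgebra `M` of
`End(V)` generated by `A`. -/
def MK (S : QRacahOps 𝕂 V) (i : ℕ) : Submodule 𝕂 V :=
  Submodule.span 𝕂 {w : V | ∃ m ∈ Algebra.adjoin 𝕂 ({S.A} : Set (Module.End 𝕂 V)),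
    ∃ v ∈ S.Ksub i, w = m v}

end QRacahOps

section Statements

variable {𝕂 V : Type*} [Field 𝕂] [IsAlgClosed 𝕂]
  [AddCommGroup V] [Module 𝕂 V] [FiniteDimensional 𝕂 V] [Nontrivial V]


namespace QRacahOps

/-- Abbreviation for the eigenvalue `θ_k`. -/
def th (S : QRacahOps 𝕂 V) (k : ℕ) : 𝕂 := qRacahTheta S.d S.q S.a k

/-- The telescoping function `η_j = q^{d-2j+1} + q^{2j-d-1}`. -/
def eta (S : QRacahOps 𝕂 V) (j : ℕ) : 𝕂 :=
  S.q ^ ((S.d : ℤ) - 2 * (j : ℤ) + 1) + S.q ^ (2 * (j : ℤ) - (S.d : ℤ) - 1)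

variable (S : QRacahOps 𝕂 V)

lemma zpow_shift {t : ℤ} {m : ℕ} (hm : S.q ^ (2 * m) = 1) :
    S.q ^ (t - 2 * (m : ℤ)) = S.q ^ t := by
  have h : S.q ^ (2 * (m : ℤ)) = 1 := by
    rw [show (2 * (m : ℤ)) = ((2 * m : ℕ) : ℤ) by push_cast; ring, zpow_natCast, hm]
  rw [zpow_sub₀ S.hq, h]; simp

lemma zpow_shift' {t : ℤ} {m : ℕ} (hm : S.q ^ (2 * m) = 1) :
    S.q ^ (t + 2 * (m : ℤ)) = S.q ^ t := by
  have h : S.q ^ (2 * (m : ℤ)) = 1 := by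
    rw [show (2 * (m : ℤ)) = ((2 * m : ℕ) : ℤ) by push_cast; ring, zpow_natCast, hm]
  rw [zpow_add₀ S.hq, h, mul_one]

lemma theta_shift {m r : ℕ} (hm : S.q ^ (2 * m) = 1) :
    S.th (r + m) = S.th r := by
  unfold th qRacahTheta
  rw [show (S.d : ℤ) - 2 * ((r + m : ℕ) : ℤ) = ((S.d : ℤ) - 2 * (r : ℤ)) - 2 * (m : ℤ) by
        push_cast; ring,
      show 2 * ((r + m : ℕ) : ℤ) - (S.d : ℤ) = (2 * (r : ℤ) - (S.d : ℤ)) + 2 * (m : ℤ) by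
        push_cast; ring,
      S.zpow_shift hm, S.zpow_shift' hm]

lemma icc_zero_eq_range : Finset.Icc 0 S.d = Finset.range (S.d + 1) := by
  rw [Finset.range_eq_Ico, Finset.Ico_add_one_right_eq_Icc]

lemma veig_top : (⨆ j ∈ Finset.Icc 0 S.d, S.Veig j) = ⊤ := by
  rw [S.icc_zero_eq_range]; exact S.hdiag

/-- Nondegeneracy: `q^{2m} ≠ 1` for `1 ≤ m ≤ d`. -/
lemma q_pow_ne_one {m : ℕ} (h1 : 1 ≤ m) (h2 : m ≤ S.d) : S.q ^ (2 * m) ≠ 1 := by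
  intro hm
  obtain ⟨v, hv, hv0⟩ := (Submodule.ne_bot_iff _).1 (S.hVstar_ne 0 (Nat.zero_le _))
  have hd1 : 1 ≤ S.d := le_trans h1 h2
  have hVeig0m : S.Veig 0 = S.Veig m := by
    rw [S.hVeig 0 (Nat.zero_le _), S.hVeig m h2]
    have : S.th m = S.th 0 := by simpa using S.theta_shift (r := 0) hm
    unfold th at this
    rw [this]
  have hle : (⨆ j ∈ Finset.Icc 0 S.d, S.Veig j) ≤ ⨆ j ∈ Finset.Icc 1 S.d, S.Veig j := by
    refine iSup₂_le fun j hj => ?_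
    rcases Nat.eq_zero_or_pos j with rfl | hjpos
    · rw [hVeig0m]
      exact le_iSup₂ (f := fun j (_ : j ∈ Finset.Icc 1 S.d) => S.Veig j) m
        (Finset.mem_Icc.2 ⟨h1, h2⟩)
    · exact le_iSup₂ (f := fun j (_ : j ∈ Finset.Icc 1 S.d) => S.Veig j) j
        (Finset.mem_Icc.2 ⟨hjpos, (Finset.mem_Icc.1 hj).2⟩)
  have hvtop : v ∈ (⨆ j ∈ Finset.Icc 0 S.d, S.Veig j) := by rw [S.veig_top]; trivial
  have hvstar0 : v ∈ (⨆ j ∈ Finset.range 1, S.Vstar j) :=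
    le_iSup₂ (f := fun j (_ : j ∈ Finset.range 1) => S.Vstar j) 0 (by simp) hv
  have hU0 : v ∈ S.U 0 := Submodule.mem_inf.2 ⟨hvstar0, hvtop⟩
  have hU1 : v ∈ S.U 1 := by
    refine Submodule.mem_inf.2 ⟨?_, hle hvtop⟩
    refine (iSup₂_le fun j hj => ?_ : (⨆ j ∈ Finset.range 1, S.Vstar j) ≤ _) hvstar0
    exact le_iSup₂ (f := fun j (_ : j ∈ Finset.range 2) => S.Vstar j) j
      (by simp at hj ⊢; omega)
  have e0 := S.hK 0 (Nat.zero_le _) v hU0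
  have e1 := S.hK 1 hd1 v hU1
  have hsub : (S.q ^ ((S.d : ℤ) - 2 * ((0 : ℕ) : ℤ)) - S.q ^ ((S.d : ℤ) - 2 * ((1 : ℕ) : ℤ))) • v
      = 0 := by
    rw [sub_smul, ← e0, ← e1, sub_self]
  have heq : S.q ^ ((S.d : ℤ) - 2 * ((0 : ℕ) : ℤ)) = S.q ^ ((S.d : ℤ) - 2 * ((1 : ℕ) : ℤ)) :=
    sub_eq_zero.1 ((smul_eq_zero.1 hsub).resolve_right hv0)
  have hq2 : S.q ^ (2 : ℤ) = 1 := by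
    have : S.q ^ (2 : ℤ)
        = S.q ^ ((S.d : ℤ) - 2 * ((0 : ℕ) : ℤ)) * (S.q ^ ((S.d : ℤ) - 2 * ((1 : ℕ) : ℤ)))⁻¹ := by
      rw [← zpow_neg, ← zpow_add₀ S.hq]; norm_num
    rw [this, heq, mul_inv_cancel₀ (zpow_ne_zero _ S.hq)]
  apply S.hq4
  have h4 : S.q ^ (4 : ℕ) = S.q ^ (2 : ℤ) * S.q ^ (2 : ℤ) := by
    rw [← zpow_natCast S.q 4, ← zpow_add₀ S.hq]; norm_num
  rw [h4, hq2, one_mul]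


lemma mem_eig {j : ℕ} (hj : j ≤ S.d) {v : V} (hv : v ∈ S.Veig j) :
    v ∈ Module.End.eigenspace S.A (S.th j) := by
  rw [S.hVeig j hj] at hv; exact hv

lemma aeval_eig (p : Polynomial 𝕂) {μ : 𝕂} {v : V}
    (hv : v ∈ Module.End.eigenspace S.A μ) :
    Polynomial.aeval S.A p v = p.eval μ • v := by
  rcases eq_or_ne v 0 with rfl | h
  · simp
  · exact Module.End.aeval_apply_of_hasEigenvector ⟨hv, h⟩

lemma A_eig {j : ℕ} (hj : j ≤ S.d) {v : V} (hv : v ∈ S.Veig j) :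
    S.A v = S.th j • v := Module.End.mem_eigenspace_iff.1 (S.mem_eig hj hv)

lemma K_apply {i : ℕ} (hi : i ≤ S.d) {v : V} (hv : v ∈ S.U i) :
    S.K v = S.q ^ ((S.d : ℤ) - 2 * (i : ℤ)) • v := S.hK i hi v hv

lemma Kinv_apply {i : ℕ} (hi : i ≤ S.d) {v : V} (hv : v ∈ S.U i) :
    S.Kinv v = S.q ^ (2 * (i : ℤ) - (S.d : ℤ)) • v := by
  have h1 : v = S.q ^ (2 * (i : ℤ) - (S.d : ℤ)) • S.K v := by
    rw [S.hK i hi v hv, smul_smul, ← zpow_add₀ S.hq,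
      show 2 * (i : ℤ) - (S.d : ℤ) + ((S.d : ℤ) - 2 * (i : ℤ)) = 0 by ring]
    simp
  calc S.Kinv v = S.Kinv (S.q ^ (2 * (i : ℤ) - (S.d : ℤ)) • S.K v) := by rw [← h1]
    _ = S.q ^ (2 * (i : ℤ) - (S.d : ℤ)) • (S.Kinv * S.K) v := by rw [map_smul]; rfl
    _ = S.q ^ (2 * (i : ℤ) - (S.d : ℤ)) • v := by rw [S.hKinvK]; rfl

lemma R_apply {i : ℕ} (hi : i ≤ S.d) {v : V} (hv : v ∈ S.U i) :
    S.R v = S.A v - S.th i • v := by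
  have hK := S.K_apply hi hv
  have hKi := S.Kinv_apply hi hv
  show (S.A - S.a • S.K - S.a⁻¹ • S.Kinv) v = _
  simp only [LinearMap.sub_apply, LinearMap.smul_apply, hK, hKi, th, qRacahTheta,
    smul_smul, add_smul]
  abel

lemma U_bot {i : ℕ} (hi : S.d < i) : S.U i = ⊥ := by
  have h : Finset.Icc i S.d = ∅ := Finset.Icc_eq_empty (by omega)
  rw [QRacahTDPair.U, h]
  simp

lemma first_step {i : ℕ} (hi : i ≤ S.d) {v : V}
    (hv : v ∈ ⨆ j ∈ Finset.range (i + 1), S.Vstar j) (c : 𝕂) :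
    S.A v - c • v ∈ ⨆ j ∈ Finset.range (i + 2), S.Vstar j := by
  have hmono : (⨆ j ∈ Finset.range (i + 1), S.Vstar j)
      ≤ ⨆ j ∈ Finset.range (i + 2), S.Vstar j :=
    iSup₂_le fun j hj => le_iSup₂ (f := fun j (_ : j ∈ Finset.range (i + 2)) => S.Vstar j) j
      (by simp only [Finset.mem_range] at hj ⊢; omega)
  have hA : S.A v ∈ ⨆ j ∈ Finset.range (i + 2), S.Vstar j := by
    have hmap : Submodule.map S.A (⨆ j ∈ Finset.range (i + 1), S.Vstar j)
        ≤ ⨆ j ∈ Finset.range (i + 2), S.Vstar j := by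
      rw [Submodule.map_iSup]
      refine iSup_le fun j => ?_
      rw [Submodule.map_iSup]
      refine iSup_le fun hj => ?_
      simp only [Finset.mem_range] at hj
      refine le_trans (S.hTriStar j (by omega)) ?_
      refine sup_le (sup_le ?_ ?_) ?_ <;>
        exact le_iSup₂ (f := fun j (_ : j ∈ Finset.range (i + 2)) => S.Vstar j) _
          (by simp only [Finset.mem_range]; omega)
    exact hmap ⟨v, hv, rfl⟩
  exact Submodule.sub_mem _ hA (Submodule.smul_mem _ c (hmono hv))

lemma second_step {i : ℕ} (hi : i ≤ S.d) {v : V}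
    (hv : v ∈ ⨆ j ∈ Finset.Icc i S.d, S.Veig j) :
    S.A v - S.th i • v ∈ ⨆ j ∈ Finset.Icc (i + 1) S.d, S.Veig j := by
  have hmap : Submodule.map (S.A - S.th i • (1 : Module.End 𝕂 V))
      (⨆ j ∈ Finset.Icc i S.d, S.Veig j) ≤ ⨆ j ∈ Finset.Icc (i + 1) S.d, S.Veig j := by
    rw [Submodule.map_iSup]
    refine iSup_le fun j => ?_
    rw [Submodule.map_iSup]
    refine iSup_le fun hj => ?_
    simp only [Finset.mem_Icc] at hj
    rintro w ⟨u, hu, rfl⟩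
    have he : (S.A - S.th i • (1 : Module.End 𝕂 V)) u = (S.th j - S.th i) • u := by
      simp only [LinearMap.sub_apply, LinearMap.smul_apply, Module.End.one_apply]
      rw [S.A_eig hj.2 hu, sub_smul]
    rw [he]
    rcases eq_or_lt_of_le hj.1 with rfl | hlt
    · rw [sub_self, zero_smul]; exact Submodule.zero_mem _
    · exact Submodule.smul_mem _ _
        (le_iSup₂ (f := fun j (_ : j ∈ Finset.Icc (i + 1) S.d) => S.Veig j) j
          (Finset.mem_Icc.2 ⟨hlt, hj.2⟩) hu)
  have he2 : S.A v - S.th i • v = (S.A - S.th i • (1 : Module.End 𝕂 V)) v := by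
    simp only [LinearMap.sub_apply, LinearMap.smul_apply, Module.End.one_apply]
  rw [he2]
  exact hmap ⟨v, hv, rfl⟩

lemma R_mem_U (i : ℕ) {v : V} (hv : v ∈ S.U i) : S.R v ∈ S.U (i + 1) := by
  rcases le_or_gt i S.d with hi | hi
  · obtain ⟨h1, h2⟩ := Submodule.mem_inf.1 hv
    rw [S.R_apply hi hv]
    exact Submodule.mem_inf.2 ⟨S.first_step hi h1 _, S.second_step hi h2⟩
  · have hv0 : v = 0 := by rw [S.U_bot hi] at hv; simpa using hv
    rw [hv0, map_zero]
    exact Submodule.zero_mem _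

lemma Rpow_mem_U (i : ℕ) {v : V} (hv : v ∈ S.U i) (k : ℕ) : (S.R ^ k) v ∈ S.U (i + k) := by
  induction k with
  | zero => simpa using hv
  | succ k ih =>
      have h1 : (S.R ^ (k + 1)) v = S.R ((S.R ^ k) v) := by rw [pow_succ']; rfl
      rw [h1, show i + (k + 1) = (i + k) + 1 from rfl]
      exact S.R_mem_U _ ih


lemma psi_R_comm {i : ℕ} (hi : i ≤ S.d) {v : V} (hv : v ∈ S.U i) :
    S.ψ (S.R v) = S.R (S.ψ v) + ((S.q - S.q⁻¹) *
      (S.q ^ ((S.d : ℤ) - 2 * (i : ℤ)) - S.q ^ (2 * (i : ℤ) - (S.d : ℤ)))) • v := by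
  have hrel : S.ψ * S.R - S.R * S.ψ = (S.q - S.q⁻¹) • (S.K - S.Kinv) := S.hψR
  have h := DFunLike.congr_fun hrel v
  simp only [LinearMap.sub_apply, Module.End.mul_apply, LinearMap.smul_apply] at h
  rw [S.K_apply hi hv, S.Kinv_apply hi hv, ← sub_smul, smul_smul] at h
  rw [eq_add_of_sub_eq h, add_comm]

lemma gamma_eta (j : ℕ) :
    (S.q - S.q⁻¹) * (S.q ^ ((S.d : ℤ) - 2 * (j : ℤ)) - S.q ^ (2 * (j : ℤ) - (S.d : ℤ)))
      = S.eta j - S.eta (j + 1) := by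
  unfold eta
  rw [show (S.d : ℤ) - 2 * ((j + 1 : ℕ) : ℤ) + 1 = ((S.d : ℤ) - 2 * (j : ℤ)) - 1 by
        push_cast; ring,
      show 2 * ((j + 1 : ℕ) : ℤ) - (S.d : ℤ) - 1 = (2 * (j : ℤ) - (S.d : ℤ)) + 1 by
        push_cast; ring]
  rw [zpow_add_one₀ S.hq, zpow_add_one₀ S.hq, zpow_sub_one₀ S.hq, zpow_sub_one₀ S.hq]
  ring

lemma psi_Rpow {i : ℕ} {v : V} (hv : v ∈ S.U i) (hψv : S.ψ v = 0) :
    ∀ k, S.ψ ((S.R ^ (k + 1)) v) = (S.eta i - S.eta (i + k + 1)) • ((S.R ^ k) v) := by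
  intro k
  induction k with
  | zero =>
      rcases le_or_gt i S.d with hi | hi
      · have h := S.psi_R_comm hi hv
        rw [hψv, map_zero, zero_add, S.gamma_eta i] at h
        simpa using h
      · have hv0 : v = 0 := by rw [S.U_bot hi] at hv; simpa using hv
        simp [hv0]
  | succ k ih =>
      have hw : (S.R ^ (k + 1)) v ∈ S.U (i + (k + 1)) := S.Rpow_mem_U i hv (k + 1)
      have hpow : (S.R ^ (k + 1 + 1)) v = S.R ((S.R ^ (k + 1)) v) := by rw [pow_succ']; rfl
      rcases le_or_gt (i + (k + 1)) S.d with hle | hlt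
      · have h := S.psi_R_comm hle hw
        rw [hpow, h, ih, map_smul, S.gamma_eta (i + (k + 1))]
        have hpow2 : S.R ((S.R ^ k) v) = (S.R ^ (k + 1)) v := by rw [pow_succ']; rfl
        rw [hpow2, ← add_smul]
        congr 1
        simp only [show i + (k + 1) = i + k + 1 from rfl]
        ring
      · have hw0 : (S.R ^ (k + 1)) v = 0 := by rw [S.U_bot hlt] at hw; simpa using hw
        rw [hpow, hw0, map_zero, map_zero, smul_zero]

lemma eta_sub_ne {i k : ℕ} (hi2 : 2 * i ≤ S.d) (hi1 : 1 ≤ i)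
    (hk1 : S.d - 2 * i + 2 ≤ k) (hk2 : k ≤ S.d - i + 1) :
    S.eta i - S.eta (i + k) ≠ 0 := by
  have hq := S.hq
  set x := S.q ^ ((S.d : ℤ) - 2 * (i : ℤ) + 1) with hx
  set y := S.q ^ ((S.d : ℤ) - 2 * (i : ℤ) - 2 * (k : ℤ) + 1) with hy
  have hx0 : x ≠ 0 := zpow_ne_zero _ hq
  have hy0 : y ≠ 0 := zpow_ne_zero _ hq
  have hetai : S.eta i = x + x⁻¹ := by
    rw [eta, hx, ← zpow_neg]
    congr 2
    ring
  have hetaik : S.eta (i + k) = y + y⁻¹ := by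
    rw [eta, hy, ← zpow_neg]
    congr 2 <;> push_cast <;> ring
  intro h
  have hfac : (x - y) * (x * y - 1) = 0 := by
    have h2 : (x + x⁻¹ - (y + y⁻¹)) = 0 := by rw [← hetai, ← hetaik]; exact h
    have h3 : (x - y) * (x * y - 1) = (x + x⁻¹ - (y + y⁻¹)) * (x * y) := by
      field_simp
      ring
    rw [h3, h2, zero_mul]
  have hxy1 : x * y⁻¹ = S.q ^ (2 * (k : ℤ)) := by
    rw [hx, hy, ← zpow_neg, ← zpow_add₀ hq]
    congr 1
    ring
  have hxy2 : x * y = S.q ^ (2 * (S.d : ℤ) - 4 * (i : ℤ) - 2 * (k : ℤ) + 2) := by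
    rw [hx, hy, ← zpow_add₀ hq]
    congr 1
    ring
  rcases mul_eq_zero.1 hfac with h1 | h2
  · have hone : S.q ^ (2 * k) = 1 := by
      have hxy : x = y := sub_eq_zero.1 h1
      have h4 : S.q ^ (2 * (k : ℤ)) = 1 := by rw [← hxy1, hxy, mul_inv_cancel₀ hy0]
      rwa [show (2 * (k : ℤ)) = ((2 * k : ℕ) : ℤ) by push_cast; ring, zpow_natCast] at h4
    exact S.q_pow_ne_one (by omega) (by omega) hone
  · have hone : S.q ^ (2 * (k + 2 * i - S.d - 1)) = 1 := by
      have h3 : S.q ^ (((2 * (k + 2 * i - S.d - 1) : ℕ)) : ℤ) = (x * y)⁻¹ := by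
        rw [hxy2, ← zpow_neg]
        congr 1
        omega
      rw [← zpow_natCast, h3, sub_eq_zero.1 h2, inv_one]
    exact S.q_pow_ne_one (by omega) (by omega) hone

lemma aeval_maps (p : Polynomial 𝕂) (s : Finset 𝕂) {v : V}
    (hv : v ∈ ⨆ μ ∈ s, Module.End.eigenspace S.A μ) :
    Polynomial.aeval S.A p v ∈ ⨆ μ ∈ s, Module.End.eigenspace S.A μ := by
  have hmap : Submodule.map (Polynomial.aeval S.A p) (⨆ μ ∈ s, Module.End.eigenspace S.A μ)
      ≤ ⨆ μ ∈ s, Module.End.eigenspace S.A μ := by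
    rw [Submodule.map_iSup]
    refine iSup_le fun μ => ?_
    rw [Submodule.map_iSup]
    refine iSup_le fun hμ => ?_
    rintro w ⟨u, hu, rfl⟩
    rw [S.aeval_eig p hu]
    exact Submodule.smul_mem _ _
      (le_iSup₂ (f := fun μ (_ : μ ∈ s) => Module.End.eigenspace S.A μ) μ hμ hu)
  exact hmap ⟨v, hv, rfl⟩

lemma kill (p : Polynomial 𝕂) :
    ∀ s : Finset 𝕂, (∀ μ ∈ s, p.eval μ ≠ 0) →
      ∀ v ∈ ⨆ μ ∈ s, Module.End.eigenspace S.A μ, Polynomial.aeval S.A p v = 0 → v = 0 := by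
  classical
  intro s
  induction s using Finset.induction_on with
  | empty => intro _ v hv _; simpa using hv
  | @insert a s ha ih =>
      intro hs v hv hp
      rw [Finset.iSup_insert] at hv
      obtain ⟨w, hw, u, hu, rfl⟩ := Submodule.mem_sup.1 hv
      have hpw : Polynomial.aeval S.A p w = p.eval a • w := S.aeval_eig p hw
      have hpu : Polynomial.aeval S.A p u ∈ ⨆ μ ∈ s, Module.End.eigenspace S.A μ :=
        S.aeval_maps p s hu
      have hsum : p.eval a • w + Polynomial.aeval S.A p u = 0 := by
        rw [← hpw, ← map_add]; exact hp
      have hdisj : Disjoint (Module.End.eigenspace S.A a)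
          (⨆ μ ∈ s, Module.End.eigenspace S.A μ) := by
        have h := (Module.End.eigenspaces_iSupIndep S.A).disjoint_biSup
          (y := (↑s : Set 𝕂)) (x := a) (by simpa using ha)
        simpa using h
      have hw0 : p.eval a • w = 0 := by
        have hmem : p.eval a • w ∈ (Module.End.eigenspace S.A a)
            ⊓ (⨆ μ ∈ s, Module.End.eigenspace S.A μ) := by
          refine Submodule.mem_inf.2 ⟨Submodule.smul_mem _ _ hw, ?_⟩
          have : p.eval a • w = -(Polynomial.aeval S.A p u) :=
            eq_neg_of_add_eq_zero_left hsum
          rw [this]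
          exact Submodule.neg_mem _ hpu
        rw [hdisj.eq_bot] at hmem
        simpa using hmem
      have hww : w = 0 := by
        rcases smul_eq_zero.1 hw0 with h | h
        · exact absurd h (hs a (Finset.mem_insert_self a s))
        · exact h
      have huu : u = 0 := by
        refine ih (fun μ hμ => hs μ (Finset.mem_insert_of_mem hμ)) u hu ?_
        have := hsum
        rw [hw0, zero_add] at this
        exact this
      rw [hww, huu, add_zero]

lemma aeval_lin (c : 𝕂) (w : V) :
    Polynomial.aeval S.A (Polynomial.X - Polynomial.C c) w = S.A w - c • w := by
  simp [map_sub, Module.algebraMap_end_apply]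

lemma Rpow_tau {i : ℕ} {v : V} (hv : v ∈ S.U i) :
    ∀ k, i + k ≤ S.d + 1 →
      (S.R ^ k) v = Polynomial.aeval S.A (qRacahTau S.d S.q S.a i (i + k)) v := by
  intro k
  induction k with
  | zero =>
      intro _
      simp [qRacahTau]
  | succ k ih =>
      intro hk
      have hik : i + k ≤ S.d := by omega
      have hw := S.Rpow_mem_U i hv k
      have h1 : (S.R ^ (k + 1)) v = S.R ((S.R ^ k) v) := by rw [pow_succ']; rfl
      rw [h1, S.R_apply hik hw, ih (by omega)]
      have htau : qRacahTau S.d S.q S.a i (i + (k + 1))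
          = qRacahTau S.d S.q S.a i (i + k)
            * (Polynomial.X - Polynomial.C (S.th (i + k))) := by
        unfold qRacahTau th
        rw [show i + (k + 1) = (i + k) + 1 from rfl]
        exact Finset.prod_Ico_succ_top (by omega) _
      rw [htau, mul_comm, map_mul]
      have h2 : (Polynomial.aeval S.A (Polynomial.X - Polynomial.C (S.th (i + k)))
          * Polynomial.aeval S.A (qRacahTau S.d S.q S.a i (i + k))) v
          = Polynomial.aeval S.A (Polynomial.X - Polynomial.C (S.th (i + k)))
            (Polynomial.aeval S.A (qRacahTau S.d S.q S.a i (i + k)) v) := rfl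
      rw [h2, S.aeval_lin]

end QRacahOps

/-- for `0 ≤ i ≤ d/2`, the kernel of `ψ` restricted to `U_i` is
`K_i = U_i ∩ U_i^⇓`. -/
theorem statement19 (S : QRacahOps 𝕂 V) (i : ℕ) (hi : 2 * i ≤ S.d) :
    ∀ v ∈ S.U i, (S.ψ v = 0 ↔ v ∈ S.Ksub i) := by
  intro v hv
  constructor
  · intro hψv
    refine Submodule.mem_inf.2 ⟨hv, ?_⟩
    obtain ⟨hvstar, hveig⟩ := Submodule.mem_inf.1 hv
    -- Step 1: `R^{d-2i+1} v = 0` by the descent argument.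
    have hbase : (S.R ^ (S.d - i + 1)) v = 0 := by
      have h := S.Rpow_mem_U i hv (S.d - i + 1)
      rw [S.U_bot (by omega)] at h
      simpa using h
    have hstep : ∀ t, t ≤ i → (S.R ^ (S.d - 2 * i + 1 + (i - t))) v = 0 := by
      intro t
      induction t with
      | zero =>
          intro _
          rw [show S.d - 2 * i + 1 + (i - 0) = S.d - i + 1 by omega]
          exact hbase
      | succ t iht =>
          intro ht
          have h0 := iht (by omega)
          set k := S.d - 2 * i + 1 + (i - (t + 1)) with hk
          have hk1 : S.d - 2 * i + 1 + (i - t) = k + 1 := by omega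
          rw [hk1] at h0
          have hpsi := S.psi_Rpow hv hψv k
          rw [h0, map_zero] at hpsi
          have hne : S.eta i - S.eta (i + (k + 1)) ≠ 0 :=
            S.eta_sub_ne hi (by omega) (by omega) (by omega)
          exact (smul_eq_zero.1 hpsi.symm).resolve_left hne
    have hkill : (S.R ^ (S.d - 2 * i + 1)) v = 0 := by
      have h := hstep i le_rfl
      rwa [show S.d - 2 * i + 1 + (i - i) = S.d - 2 * i + 1 by omega] at h
    -- Step 2: convert to a polynomial identity.
    have htau : Polynomial.aeval S.A (qRacahTau S.d S.q S.a i (S.d - i + 1)) v = 0 := by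
      have h := S.Rpow_tau hv (S.d - 2 * i + 1) (by omega)
      rw [show i + (S.d - 2 * i + 1) = S.d - i + 1 by omega] at h
      rw [← h]
      exact hkill
    -- Step 3: spectral analysis.
    classical
    set p := qRacahTau S.d S.q S.a i (S.d - i + 1) with hp
    set T := (Finset.Icc i S.d).image S.th with hT
    set T0 := T.filter (fun μ => p.eval μ = 0) with hT0
    set T1 := T.filter (fun μ => ¬ p.eval μ = 0) with hT1
    have hvT : v ∈ ⨆ μ ∈ T, Module.End.eigenspace S.A μ := by
      refine (iSup₂_le fun j hj => ?_ : (⨆ j ∈ Finset.Icc i S.d, S.Veig j) ≤ _) hveig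
      rw [S.hVeig j (Finset.mem_Icc.1 hj).2]
      exact le_iSup₂ (f := fun μ (_ : μ ∈ T) => Module.End.eigenspace S.A μ) (S.th j)
        (Finset.mem_image_of_mem _ hj)
    have hsplit : (⨆ μ ∈ T, Module.End.eigenspace S.A μ)
        = (⨆ μ ∈ T0, Module.End.eigenspace S.A μ)
          ⊔ (⨆ μ ∈ T1, Module.End.eigenspace S.A μ) := by
      conv_lhs => rw [← Finset.filter_union_filter_not_eq (fun μ => p.eval μ = 0) T]
      exact Finset.iSup_union
    rw [hsplit] at hvT
    obtain ⟨w0, hw0, w1, hw1, hsum⟩ := Submodule.mem_sup.1 hvT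
    have hp0 : Polynomial.aeval S.A p w0 = 0 := by
      have hker : (⨆ μ ∈ T0, Module.End.eigenspace S.A μ)
          ≤ LinearMap.ker (Polynomial.aeval S.A p) := by
        refine iSup₂_le fun μ hμ => ?_
        intro w hw
        rw [LinearMap.mem_ker, S.aeval_eig p hw, (Finset.mem_filter.1 hμ).2, zero_smul]
      exact LinearMap.mem_ker.1 (hker hw0)
    have hp1 : Polynomial.aeval S.A p w1 = 0 := by
      have h := htau
      rw [← hsum, map_add, hp0, zero_add] at h
      exact h
    have hw10 : w1 = 0 :=
      S.kill p T1 (fun μ hμ => (Finset.mem_filter.1 hμ).2) w1 hw1 hp1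
    have hveq : v = w0 := by rw [← hsum, hw10, add_zero]
    -- Step 4: `w0` lies in the span of the low eigenspaces.
    have hgood : (⨆ μ ∈ T0, Module.End.eigenspace S.A μ)
        ≤ ⨆ j ∈ Finset.range (S.d - i + 1), S.Veig j := by
      refine iSup₂_le fun μ hμ => ?_
      obtain ⟨hμT, hμ0⟩ := Finset.mem_filter.1 hμ
      have hμ0' : p.eval μ = 0 := hμ0
      rw [hp, qRacahTau, Polynomial.eval_prod] at hμ0'
      obtain ⟨k, hk, hk0⟩ := Finset.prod_eq_zero_iff.1 hμ0'
      simp only [Polynomial.eval_sub, Polynomial.eval_X, Polynomial.eval_C] at hk0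
      have hμk : μ = qRacahTheta S.d S.q S.a k := sub_eq_zero.1 hk0
      simp only [Finset.mem_Ico] at hk
      have hkd : k ≤ S.d := by omega
      have : Module.End.eigenspace S.A μ = S.Veig k := by
        rw [S.hVeig k hkd, hμk]
      rw [this]
      exact le_iSup₂ (f := fun j (_ : j ∈ Finset.range (S.d - i + 1)) => S.Veig j) k
        (Finset.mem_range.2 (by omega))
    refine Submodule.mem_inf.2 ⟨hvstar, ?_⟩
    rw [hveq]
    exact hgood hw0
  · intro hK
    exact LinearMap.mem_ker.1 (S.hψKer i hi hK)

end Statements
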